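/- Let C ⊆ ℝ^d be a k-dimensional corner function with k = d+1, i.e. C(x) = max_{1≤j≤d+1}{ℓ_j(x) + b_j} where the d+1 affine functionals L_j(x, x_{d+1}) = x_{d+1} − ℓ_j(x) are linearly independent on ℝ^{d+1}. Then there exists a linear functional ℓ : ℝ^d → ℝ such that C(x) − ℓ(x) → ∞ as |x| → ∞. -/

import Mathlib

open Filter


private lemma corner_aux_max_ge (n : ℕ) (y : Fin (n + 1) → ℝ) (hsum : ∑ j, y j = 0) :
    ∃ j, ‖y‖ / (n + 1 : ℝ) ≤ y j := by
  by_contra hcon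
  push_neg at hcon
  set c : ℝ := ‖y‖ / (n + 1 : ℝ) with hc
  have hn1 : (0:ℝ) < (n + 1 : ℝ) := by positivity
  have hpos : 0 < ‖y‖ := by
    have h1 : ∑ j, y j < ∑ _j : Fin (n+1), c :=
      Finset.sum_lt_sum_of_nonempty (by simp) (fun j _ => hcon j)
    have h2 : ∑ _j : Fin (n+1), c = ‖y‖ := by
      rw [Finset.sum_const, Finset.card_univ, Fintype.card_fin, nsmul_eq_mul, hc]
      push_cast
      field_simp
    rw [hsum, h2] at h1
    exact h1
  have hcpos : 0 < c := by positivity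
  have habs : ∀ j, ‖y j‖ < ‖y‖ := by
    intro j
    have hrw : ((n:ℝ) + 1) * c = ‖y‖ := by
      rw [hc]; field_simp
    have hub : y j < ((n:ℝ) + 1) * c := by
      have : c ≤ ((n:ℝ) + 1) * c := le_mul_of_one_le_left hcpos.le (by push_cast; linarith)
      exact lt_of_lt_of_le (hcon j) this
    have hlb : -(((n:ℝ) + 1) * c) < y j := by
      have hsplit : y j = -∑ i ∈ Finset.univ.erase j, y i := by
        have := Finset.add_sum_erase Finset.univ y (Finset.mem_univ j)
        rw [hsum] at this
        linarith
      have hbound : ∑ i ∈ Finset.univ.erase j, y i ≤ (n : ℝ) * c := by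
        calc ∑ i ∈ Finset.univ.erase j, y i
            ≤ (Finset.univ.erase j).card • c :=
              Finset.sum_le_card_nsmul _ _ _ (fun i _ => (hcon i).le)
          _ = (n : ℝ) * c := by
              rw [Finset.card_erase_of_mem (Finset.mem_univ j), Finset.card_univ,
                Fintype.card_fin]
              simp [nsmul_eq_mul]
      have h6 : -((n:ℝ) * c) ≤ y j := by rw [hsplit]; linarith
      nlinarith
    rw [Real.norm_eq_abs, ← hrw, abs_lt]
    exact ⟨hlb, hub⟩
  exact lt_irrefl _ ((pi_norm_lt_iff hpos).2 habs)


theorem corner_coercive_after_linear_shift (d : ℕ)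
    (ℓ : Fin (d + 1) → (Fin d → ℝ) →ₗ[ℝ] ℝ) (b : Fin (d + 1) → ℝ)
    (hind : LinearIndependent ℝ
      (fun j : Fin (d + 1) =>
        (LinearMap.snd ℝ (Fin d → ℝ) ℝ) -
          (ℓ j).comp (LinearMap.fst ℝ (Fin d → ℝ) ℝ))) :
    ∃ ℓ₀ : (Fin d → ℝ) →ₗ[ℝ] ℝ,
      Tendsto (fun x : Fin d → ℝ => (⨆ j, (ℓ j x + b j)) - ℓ₀ x)
        (Filter.cocompact (Fin d → ℝ)) atTop := by
  classical
  set L : Fin (d + 1) → ((Fin d → ℝ) × ℝ →ₗ[ℝ] ℝ) := fun j =>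
      (LinearMap.snd ℝ (Fin d → ℝ) ℝ) -
        (ℓ j).comp (LinearMap.fst ℝ (Fin d → ℝ) ℝ) with hLdef
  -- the average functional
  set ℓ₀ : (Fin d → ℝ) →ₗ[ℝ] ℝ := ((d + 1 : ℝ))⁻¹ • ∑ j, ℓ j with hℓ₀
  refine ⟨ℓ₀, ?_⟩
  have hd1 : (0:ℝ) < (d + 1 : ℝ) := by positivity
  -- the functionals L span the whole dual
  have hcard : Fintype.card (Fin (d + 1))
      = Module.finrank ℝ ((Fin d → ℝ) × ℝ →ₗ[ℝ] ℝ) := by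
    simp [Module.finrank_linearMap]
  have hspan : Submodule.span ℝ (Set.range L) = ⊤ :=
    hind.span_eq_top_of_card_eq_finrank hcard
  -- the map T collecting the differences ℓ j - ℓ₀
  set T : (Fin d → ℝ) →ₗ[ℝ] (Fin (d + 1) → ℝ) :=
    LinearMap.pi (fun j => ℓ j - ℓ₀) with hT
  have hTapp : ∀ (x : Fin d → ℝ) (j), T x j = ℓ j x - ℓ₀ x := fun x j => rfl
  -- sum of the differences vanishes
  have hsum : ∀ x : Fin d → ℝ, ∑ j, T x j = 0 := by
    intro x
    have : ℓ₀ x = ((d + 1 : ℝ))⁻¹ * ∑ j, ℓ j x := by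
      simp [hℓ₀]
    simp only [hTapp, Finset.sum_sub_distrib, Finset.sum_const, Finset.card_univ,
      Fintype.card_fin, this, nsmul_eq_mul]
    push_cast
    field_simp
    ring
  -- kernel of T is trivial
  have hker : LinearMap.ker T = ⊥ := by
    rw [LinearMap.ker_eq_bot']
    intro x hx
    have hxj : ∀ j, ℓ j x = ℓ₀ x := by
      intro j
      have := congrFun hx j
      have h2 : ℓ j x - ℓ₀ x = 0 := this
      linarith
    set v : (Fin d → ℝ) × ℝ := (x, ℓ₀ x) with hv
    have hLv : ∀ j, L j v = 0 := by
      intro j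
      simp [hLdef, hv, hxj j]
    have hall : ∀ φ : Module.Dual ℝ ((Fin d → ℝ) × ℝ), φ v = 0 := by
      intro φ
      have hφ : φ ∈ Submodule.span ℝ (Set.range L) := by rw [hspan]; trivial
      have hle : Submodule.span ℝ (Set.range L) ≤
          LinearMap.ker (LinearMap.applyₗ (R := ℝ) v) := by
        rw [Submodule.span_le]
        rintro _ ⟨j, rfl⟩
        simpa [LinearMap.mem_ker] using hLv j
      exact hle hφ
    have hv0 : v = 0 := (Module.forall_dual_apply_eq_zero_iff ℝ v).mp hall
    have : x = 0 := congrArg Prod.fst hv0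
    exact this
  obtain ⟨K, hK0, hKa⟩ := T.exists_antilipschitzWith hker
  -- the quantitative key estimate
  have key : ∀ x : Fin d → ℝ, ∃ j, ‖T x‖ / (d + 1 : ℝ) ≤ T x j := by
    intro x
    exact corner_aux_max_ge d (T x) (hsum x)
  -- lower bound for the shifted corner function
  set B : ℝ := ⨅ j, b j with hB
  have hBle : ∀ j, B ≤ b j := fun j =>
    ciInf_le (Set.Finite.bddBelow (Set.finite_range b)) j
  have hnorm : ∀ x : Fin d → ℝ, ‖x‖ ≤ K * ‖T x‖ := by
    intro x
    have := hKa.le_mul_dist x 0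
    simpa [map_zero, dist_zero_right] using this
  have hmain : ∀ x : Fin d → ℝ,
      (K:ℝ)⁻¹ / (d + 1 : ℝ) * ‖x‖ + B ≤ (⨆ j, (ℓ j x + b j)) - ℓ₀ x := by
    intro x
    obtain ⟨j, hj⟩ := key x
    have h1 : ℓ j x + b j ≤ ⨆ i, (ℓ i x + b i) :=
      le_ciSup (f := fun i => ℓ i x + b i) (Set.Finite.bddAbove (Set.finite_range _)) j
    have h2 : (K:ℝ)⁻¹ * ‖x‖ ≤ ‖T x‖ := by
      have hKpos : (0:ℝ) < K := hK0
      rw [inv_mul_le_iff₀ hKpos]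
      exact hnorm x
    have h3 : (K:ℝ)⁻¹ / (d + 1 : ℝ) * ‖x‖ ≤ ‖T x‖ / (d + 1 : ℝ) := by
      rw [div_mul_eq_mul_div]
      gcongr
    have h4 : ‖T x‖ / (d + 1 : ℝ) ≤ ℓ j x - ℓ₀ x := by
      rw [← hTapp x j]; exact hj
    have h5 : B ≤ b j := hBle j
    linarith
  have hc0 : (0:ℝ) < (K:ℝ)⁻¹ / (d + 1 : ℝ) := by positivity
  have htend : Tendsto (fun x : Fin d → ℝ => (K:ℝ)⁻¹ / (d + 1 : ℝ) * ‖x‖ + B)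
      (Filter.cocompact (Fin d → ℝ)) atTop := by
    apply tendsto_atTop_add_const_right
    exact tendsto_norm_cocompact_atTop.const_mul_atTop hc0
  exact tendsto_atTop_mono hmain htend
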